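/- Let q(x|θ) be, up to normalization, ⊕ₙ αₙ(θ)·bₙ in Bayes space. Then the score satisfies ∂ln q/∂θ = Σₘ (∂αₘ/∂θ)(ln bₘ − E_q[ln bₘ]) and the Fisher information I_θ = Var_ν(∂ln q/∂θ) equals (∂α/∂θ)ᵀ⟨b,b⟩_ν(∂α/∂θ); in particular, when the parameters are the coordinates themselves (θ = α), the Fisher information matrix equals the Gram matrix ⟨b,b⟩ of the basis. -/

import Mathlib

set_option linter.unusedSectionVars false
set_option linter.unusedVariables false
set_option maxHeartbeats 1000000


open MeasureTheory Real Finset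

noncomputable section

variable {X : Type*} [MeasurableSpace X]

/-- The Bayes-space inner product `⟨p₁,p₂⟩_ν = E_ν[ln p₁ ln p₂] − E_ν[ln p₁]E_ν[ln p₂]`. -/
def bip (ν : Measure X) (p q : X → ℝ) : ℝ :=
  (∫ x, Real.log (p x) * Real.log (q x) ∂ν) -
    (∫ x, Real.log (p x) ∂ν) * (∫ x, Real.log (q x) ∂ν)

/-- Unnormalized Bayes-space linear combination `⊕ₘ αₘ·bₘ = ∏ₘ bₘ^{αₘ}`. -/
def bayesComb {M : ℕ} (b : Fin M → X → ℝ) (a : Fin M → ℝ) (x : X) : ℝ :=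
  ∏ m, b m x ^ a m

/-- Normalization constant. -/
def bayesZ (μ₀ : Measure X) {M : ℕ} (b : Fin M → X → ℝ) (a : Fin M → ℝ) : ℝ :=
  ∫ x, bayesComb b a x ∂μ₀

/-- The normalized element `q(x|θ) = ∏ₘ bₘ^{αₘ(θ)} / ∫ ∏ₘ bₘ^{αₘ(θ)}`. -/
def bayesQ (μ₀ : Measure X) {M : ℕ} (b : Fin M → X → ℝ) (a : Fin M → ℝ) (x : X) : ℝ :=
  bayesComb b a x / bayesZ μ₀ b a

variable {M : ℕ} {b : Fin M → X → ℝ}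

lemma comb_pos (hb : ∀ m x, 0 < b m x) (v : Fin M → ℝ) (x : X) : 0 < bayesComb b v x :=
  Finset.prod_pos fun m _ => Real.rpow_pos_of_pos (hb m x) _

lemma log_comb (hb : ∀ m x, 0 < b m x) (v : Fin M → ℝ) (x : X) :
    Real.log (bayesComb b v x) = ∑ m, v m * Real.log (b m x) := by
  rw [bayesComb, Real.log_prod (fun m _ => (Real.rpow_pos_of_pos (hb m x) _).ne')]
  exact Finset.sum_congr rfl fun m _ => Real.log_rpow (hb m x) _

lemma prod_single (hb : ∀ m x, 0 < b m x) (m : Fin M) (x : X) :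
    bayesComb b (Pi.single m 1) x = b m x := by
  rw [bayesComb, Finset.prod_eq_single m
    (fun k _ hk => by rw [Pi.single_eq_of_ne hk, Real.rpow_zero])
    (by simp)]
  rw [Pi.single_eq_same, Real.rpow_one]

lemma comb_add_single (hb : ∀ m x, 0 < b m x) (v : Fin M → ℝ) (m : Fin M) (x : X) :
    bayesComb b (v + Pi.single m 1) x = b m x * bayesComb b v x := by
  rw [← prod_single hb m x, bayesComb, bayesComb, bayesComb, ← Finset.prod_mul_distrib]
  exact Finset.prod_congr rfl fun k _ => by
    rw [Pi.add_apply, Real.rpow_add (hb k x), mul_comm]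

lemma comb_sub_single (hb : ∀ m x, 0 < b m x) (v : Fin M → ℝ) (m : Fin M) (x : X) :
    bayesComb b (v - Pi.single m 1) x = (b m x)⁻¹ * bayesComb b v x := by
  have h := comb_add_single hb (v - Pi.single m 1) m x
  have hv : v - Pi.single m 1 + Pi.single m 1 = v := by ring
  rw [hv] at h
  rw [h, ← mul_assoc, inv_mul_cancel₀ (hb m x).ne', one_mul]

lemma comb_integrable (μ₀ : Measure X) (hZpos : ∀ v : Fin M → ℝ, 0 < bayesZ μ₀ b v)
    (v : Fin M → ℝ) : Integrable (bayesComb b v) μ₀ := by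
  by_contra h
  exact (hZpos v).ne' (integral_undef h)

lemma abs_log_le' {t : ℝ} (ht : 0 < t) : |Real.log t| ≤ t + t⁻¹ := by
  rcases le_or_gt 1 t with h | h
  · rw [abs_of_nonneg (Real.log_nonneg h)]
    have := Real.log_le_sub_one_of_pos ht
    have h2 : (0:ℝ) < t⁻¹ := inv_pos.2 ht
    linarith
  · rw [abs_of_neg (Real.log_neg ht h)]
    have := Real.log_le_sub_one_of_pos (inv_pos.2 ht)
    rw [Real.log_inv] at this
    linarith

lemma log_mul_comb_integrable (μ₀ : Measure X) (hb : ∀ m x, 0 < b m x)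
    (hZpos : ∀ v : Fin M → ℝ, 0 < bayesZ μ₀ b v) (m : Fin M) (v : Fin M → ℝ) :
    Integrable (fun x => Real.log (b m x) * bayesComb b v x) μ₀ := by
  have hbm : AEStronglyMeasurable (b m) μ₀ :=
    (comb_integrable μ₀ hZpos (Pi.single m 1)).aestronglyMeasurable.congr
      (Filter.Eventually.of_forall fun x => prod_single hb m x)
  have hlog : AEStronglyMeasurable (fun x => Real.log (b m x)) μ₀ :=
    (Real.measurable_log.comp_aemeasurable hbm.aemeasurable).aestronglyMeasurable
  refine Integrable.mono
    ((comb_integrable μ₀ hZpos (v + Pi.single m 1)).add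
      (comb_integrable μ₀ hZpos (v - Pi.single m 1)))
    (hlog.mul (comb_integrable μ₀ hZpos v).aestronglyMeasurable)
    (Filter.Eventually.of_forall fun x => ?_)
  have hc := comb_pos hb v x
  have hcp := comb_pos hb (v + Pi.single m 1) x
  have hcm := comb_pos hb (v - Pi.single m 1) x
  rw [Real.norm_eq_abs, Real.norm_eq_abs, abs_mul, abs_of_pos hc,
    Pi.add_apply, abs_of_pos (add_pos hcp hcm)]
  calc |Real.log (b m x)| * bayesComb b v x
      ≤ (b m x + (b m x)⁻¹) * bayesComb b v x :=
        mul_le_mul_of_nonneg_right (abs_log_le' (hb m x)) hc.le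
    _ = bayesComb b (v + Pi.single m 1) x + bayesComb b (v - Pi.single m 1) x := by
        rw [comb_add_single hb, comb_sub_single hb]; ring

lemma score_hasDerivAt (μ₀ : Measure X) (hb : ∀ m x, 0 < b m x)
    (hZpos : ∀ v : Fin M → ℝ, 0 < bayesZ μ₀ b v)
    (a : ℝ → Fin M → ℝ) (d : Fin M → ℝ) (θ : ℝ)
    (ha : ∀ m, HasDerivAt (fun t => a t m) (d m) θ)
    (hZD : HasDerivAt (fun t => bayesZ μ₀ b (a t))
      (∫ x, (∑ m, d m * Real.log (b m x)) * bayesComb b (a θ) x ∂μ₀) θ) (x : X) :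
    HasDerivAt (fun t => Real.log (bayesQ μ₀ b (a t) x))
      (∑ m, d m * (Real.log (b m x) - ∫ y, Real.log (b m y) * bayesQ μ₀ b (a θ) y ∂μ₀)) θ := by
  have hfun : ∀ t, Real.log (bayesQ μ₀ b (a t) x)
      = (∑ m, a t m * Real.log (b m x)) - Real.log (bayesZ μ₀ b (a t)) := fun t => by
    rw [bayesQ, Real.log_div (comb_pos hb _ x).ne' (hZpos _).ne', log_comb hb]
  have h2 : HasDerivAt (fun t => ∑ m, a t m * Real.log (b m x))
      (∑ m, d m * Real.log (b m x)) θ :=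
    HasDerivAt.fun_sum fun m _ => (ha m).mul_const _
  have h3 := hZD.log (hZpos (a θ)).ne'
  have hmain := h2.fun_sub h3
  have hEq : (fun t => (∑ m, a t m * Real.log (b m x)) - Real.log (bayesZ μ₀ b (a t)))
      = fun t => Real.log (bayesQ μ₀ b (a t) x) := funext fun t => (hfun t).symm
  rw [hEq] at hmain
  have key : (∫ x, (∑ m, d m * Real.log (b m x)) * bayesComb b (a θ) x ∂μ₀)
      = ∑ m, d m * ∫ y, Real.log (b m y) * bayesComb b (a θ) y ∂μ₀ := by
    have h4 : ∀ y, (∑ m, d m * Real.log (b m y)) * bayesComb b (a θ) y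
        = ∑ m, d m * (Real.log (b m y) * bayesComb b (a θ) y) := fun y => by
      rw [Finset.sum_mul]; exact Finset.sum_congr rfl fun m _ => mul_assoc _ _ _
    simp_rw [h4]
    rw [integral_finset_sum _ fun m _ =>
      (log_mul_comb_integrable μ₀ hb hZpos m (a θ)).const_mul (d m)]
    exact Finset.sum_congr rfl fun m _ => integral_const_mul _ _
  have hQint : ∀ m : Fin M, (∫ y, Real.log (b m y) * bayesQ μ₀ b (a θ) y ∂μ₀)
      = (∫ y, Real.log (b m y) * bayesComb b (a θ) y ∂μ₀) / bayesZ μ₀ b (a θ) := fun m => by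
    simp_rw [bayesQ, ← mul_div_assoc]
    exact integral_div _ _
  rw [key] at hmain
  refine hmain.congr_deriv ?_
  simp_rw [hQint, mul_sub, Finset.sum_sub_distrib, Finset.sum_div, mul_div_assoc]

lemma l2_mul_integrable {ν : Measure X} (f g : X → ℝ)
    (hf : MemLp f 2 ν) (hg : MemLp g 2 ν) : Integrable (fun x => f x * g x) ν := by
  have h : MemLp (f • g) 1 ν := MemLp.smul (r := 1) hg hf
  exact memLp_one_iff_integrable.mp h

lemma cov_eq {ν : Measure X} [IsProbabilityMeasure ν] (f g : X → ℝ)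
    (hf : MemLp f 2 ν) (hg : MemLp g 2 ν) (μ μ' : ℝ) :
    (∫ x, (f x - μ) * (g x - μ') ∂ν) - (∫ x, f x - μ ∂ν) * (∫ x, g x - μ' ∂ν)
      = (∫ x, f x * g x ∂ν) - (∫ x, f x ∂ν) * (∫ x, g x ∂ν) := by
  have hf1 : Integrable f ν := hf.integrable one_le_two
  have hg1 : Integrable g ν := hg.integrable one_le_two
  have hfg : Integrable (fun x => f x * g x) ν := l2_mul_integrable f g hf hg
  have h1 : (∫ x, f x - μ ∂ν) = (∫ x, f x ∂ν) - μ := by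
    rw [integral_sub hf1 (integrable_const μ), integral_const]; simp
  have h2 : (∫ x, g x - μ' ∂ν) = (∫ x, g x ∂ν) - μ' := by
    rw [integral_sub hg1 (integrable_const μ'), integral_const]; simp
  have h3 : (∫ x, (f x - μ) * (g x - μ') ∂ν)
      = (∫ x, f x * g x ∂ν) - μ' * (∫ x, f x ∂ν) - μ * (∫ x, g x ∂ν) + μ * μ' := by
    have he : ∀ x, (f x - μ) * (g x - μ')
        = f x * g x - μ' * f x - μ * g x + μ * μ' := fun x => by ring
    simp_rw [he]
    have i1 : Integrable (fun x => f x * g x - μ' * f x) ν := by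
      exact hfg.sub (hf1.const_mul μ')
    have i2 : Integrable (fun x => f x * g x - μ' * f x - μ * g x) ν := by
      exact i1.sub (hg1.const_mul μ)
    rw [integral_add i2 (integrable_const _), integral_sub i1 (hg1.const_mul μ),
      integral_sub hfg (hf1.const_mul μ'), integral_const_mul, integral_const_mul, integral_const]
    simp
  rw [h1, h2, h3]; ring

lemma cov_sum {ν : Measure X} [IsProbabilityMeasure ν] (b : Fin M → X → ℝ)
    (hL2 : ∀ m, MemLp (fun x => Real.log (b m x)) 2 ν) (c μm : Fin M → ℝ) :
    (∫ x, (∑ m, c m * (Real.log (b m x) - μm m)) ^ 2 ∂ν)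
      - (∫ x, ∑ m, c m * (Real.log (b m x) - μm m) ∂ν) ^ 2
      = ∑ m, ∑ n, c m * c n * bip ν (b m) (b n) := by
  have hG2 : ∀ m, MemLp (fun x => Real.log (b m x) - μm m) 2 ν := fun m =>
    (hL2 m).sub (memLp_const _)
  have hGi : ∀ m, Integrable (fun x => Real.log (b m x) - μm m) ν := fun m =>
    (hG2 m).integrable one_le_two
  have hGGi : ∀ m n, Integrable
      (fun x => (Real.log (b m x) - μm m) * (Real.log (b n x) - μm n)) ν := fun m n =>
    l2_mul_integrable _ _ (hG2 m) (hG2 n)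
  have e1 : (∫ x, (∑ m, c m * (Real.log (b m x) - μm m)) ^ 2 ∂ν)
      = ∑ m, ∑ n, (c m * c n) *
          ∫ x, (Real.log (b m x) - μm m) * (Real.log (b n x) - μm n) ∂ν := by
    have he : ∀ x, (∑ m, c m * (Real.log (b m x) - μm m)) ^ 2
        = ∑ m, ∑ n, (c m * c n) *
            ((Real.log (b m x) - μm m) * (Real.log (b n x) - μm n)) := fun x => by
      rw [sq, Finset.sum_mul_sum]
      exact Finset.sum_congr rfl fun m _ => Finset.sum_congr rfl fun n _ => by ring
    simp_rw [he]
    rw [integral_finset_sum _ fun m _ => integrable_finset_sum _ fun n _ =>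
      (hGGi m n).const_mul _]
    refine Finset.sum_congr rfl fun m _ => ?_
    rw [integral_finset_sum _ fun n _ => (hGGi m n).const_mul _]
    exact Finset.sum_congr rfl fun n _ => integral_const_mul _ _
  have e2 : (∫ x, ∑ m, c m * (Real.log (b m x) - μm m) ∂ν)
      = ∑ m, c m * ∫ x, Real.log (b m x) - μm m ∂ν := by
    rw [integral_finset_sum _ fun m _ => (hGi m).const_mul _]
    exact Finset.sum_congr rfl fun m _ => integral_const_mul _ _
  rw [e1, e2, sq, Finset.sum_mul_sum, ← Finset.sum_sub_distrib]
  refine Finset.sum_congr rfl fun m _ => ?_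
  rw [← Finset.sum_sub_distrib]
  refine Finset.sum_congr rfl fun n _ => ?_
  have hb' : (∫ x, (Real.log (b m x) - μm m) * (Real.log (b n x) - μm n) ∂ν)
      - (∫ x, Real.log (b m x) - μm m ∂ν) * (∫ x, Real.log (b n x) - μm n ∂ν)
      = bip ν (b m) (b n) := by
    simpa [bip] using cov_eq (fun x => Real.log (b m x)) (fun x => Real.log (b n x))
      (hL2 m) (hL2 n) (μm m) (μm n)
  rw [← hb']; ring

/-- **Score and Fisher information in Bayes space.**  For `q(x|θ)` the normalized Bayes-space
combination `⊕ₘ αₘ(θ)·bₘ`: (i) the score is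
`∂ln q/∂θ = Σₘ (∂αₘ/∂θ)(ln bₘ − E_q[ln bₘ])`; (ii) the Fisher information
`I_θ = Var_ν(∂ln q/∂θ)` equals `(∂α/∂θ)ᵀ⟨b,b⟩_ν(∂α/∂θ)`; and (iii) when the parameters are
the coordinates themselves, the Fisher information matrix equals the Gram matrix `⟨b,b⟩`
of the basis.  (The hypotheses `hZ`, `hZc` state that differentiation may be interchanged
with the normalization integral.) -/
theorem score_and_fisher_information (μ₀ : Measure X) (ν : Measure X) [IsProbabilityMeasure ν]
    {M : ℕ} (b : Fin M → X → ℝ) (hb : ∀ m x, 0 < b m x)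
    (α : ℝ → Fin M → ℝ) (hα : ∀ m, Differentiable ℝ fun t => α t m) (θ : ℝ)
    (hZpos : ∀ v : Fin M → ℝ, 0 < bayesZ μ₀ b v)
    (hZ : HasDerivAt (fun t => bayesZ μ₀ b (α t))
      (∫ x, (∑ m, deriv (fun s => α s m) θ * Real.log (b m x)) * bayesComb b (α θ) x ∂μ₀) θ)
    (hL2 : ∀ m, MemLp (fun x => Real.log (b m x)) 2 ν)
    (c : Fin M → ℝ)
    (hZc : ∀ n : Fin M, HasDerivAt (fun t => bayesZ μ₀ b (Function.update c n t))
      (∫ x, Real.log (b n x) * bayesComb b c x ∂μ₀) (c n)) :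
    (∀ x, deriv (fun t => Real.log (bayesQ μ₀ b (α t) x)) θ =
      ∑ m, deriv (fun s => α s m) θ *
        (Real.log (b m x) - ∫ y, Real.log (b m y) * bayesQ μ₀ b (α θ) y ∂μ₀)) ∧
    ((∫ x, (deriv (fun t => Real.log (bayesQ μ₀ b (α t) x)) θ) ^ 2 ∂ν) -
        (∫ x, deriv (fun t => Real.log (bayesQ μ₀ b (α t) x)) θ ∂ν) ^ 2 =
      ∑ m, ∑ n, deriv (fun s => α s m) θ * deriv (fun s => α s n) θ * bip ν (b m) (b n)) ∧
    (∀ m n : Fin M,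
      (∫ x, deriv (fun t => Real.log (bayesQ μ₀ b (Function.update c m t) x)) (c m) *
          deriv (fun t => Real.log (bayesQ μ₀ b (Function.update c n t) x)) (c n) ∂ν) -
        (∫ x, deriv (fun t => Real.log (bayesQ μ₀ b (Function.update c m t) x)) (c m) ∂ν) *
          (∫ x, deriv (fun t => Real.log (bayesQ μ₀ b (Function.update c n t) x)) (c n) ∂ν) =
      bip ν (b m) (b n)) := by

  have hd : ∀ m : Fin M, HasDerivAt (fun t => α t m) (deriv (fun s => α s m) θ) θ :=
    fun m => (hα m θ).hasDerivAt
  have hscore := score_hasDerivAt μ₀ hb hZpos α (fun m => deriv (fun s => α s m) θ) θ hd hZ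
  have part1 : ∀ x, deriv (fun t => Real.log (bayesQ μ₀ b (α t) x)) θ
      = ∑ m, deriv (fun s => α s m) θ *
          (Real.log (b m x) - ∫ y, Real.log (b m y) * bayesQ μ₀ b (α θ) y ∂μ₀) :=
    fun x => (hscore x).deriv
  refine ⟨part1, ?_, ?_⟩
  · simp_rw [part1]
    exact cov_sum b hL2 _ _
  · intro m n
    have hco : ∀ (k : Fin M) (x : X),
        deriv (fun t => Real.log (bayesQ μ₀ b (Function.update c k t) x)) (c k)
        = Real.log (b k x) - ∫ y, Real.log (b k y) * bayesQ μ₀ b c y ∂μ₀ := by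
      intro k x
      have hdk : ∀ j : Fin M, HasDerivAt (fun t => Function.update c k t j)
          ((fun j => if j = k then (1:ℝ) else 0) j) (c k) := fun j => by
        rcases eq_or_ne j k with rfl | hj
        · simpa [Function.update_self] using hasDerivAt_id' (c j)
        · simpa [Function.update_of_ne hj, hj] using hasDerivAt_const (c k) (c j)
      have hint : (∫ x, Real.log (b k x) * bayesComb b c x ∂μ₀)
          = ∫ x, (∑ j, (if j = k then (1:ℝ) else 0) * Real.log (b j x)) *
              bayesComb b (Function.update c k (c k)) x ∂μ₀ := by
        rw [Function.update_eq_self]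
        congr 1; funext x; congr 1
        simp
      have hZD := hZc k
      rw [hint] at hZD
      have h := (score_hasDerivAt μ₀ hb hZpos (fun t => Function.update c k t)
        (fun j => if j = k then 1 else 0) (c k) hdk hZD x).deriv
      rw [h]
      simp [Function.update_eq_self]
    simp_rw [hco]
    simpa [bip] using cov_eq (fun x => Real.log (b m x)) (fun x => Real.log (b n x))
      (hL2 m) (hL2 n) (∫ y, Real.log (b m y) * bayesQ μ₀ b c y ∂μ₀)
      (∫ y, Real.log (b n y) * bayesQ μ₀ b c y ∂μ₀)
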